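/- Let n ≥ 3 be odd and let x* ∈ {0,1}ⁿ be any input appearing in the n-party Mermin inequality, i.e., Σᵢ x*ᵢ = n − 2k* for some nonnegative integer k*. Then there exists an n-party box P with binary inputs and outputs and an output string a* ∈ {0,1}ⁿ such that: (i) P satisfies the contiguous-subset relativistic causality constraints; (ii) P maximally violates the Mermin inequality, i.e., for every x ∈ {0,1}ⁿ with Σᵢ xᵢ = n − 2k (k a nonnegative integer), the n-party correlator ⟨x⟩ := Σ_{a∈{0,1}ⁿ} (−1)^{a₁⊕⋯⊕aₙ} P(a|x) equals (−1)^k; and (iii) P(a*|x*) = 1, i.e., the output on input x* is deterministic. -/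

import Mathlib

open Finset

namespace MerminAttackAux

/-- Boolean to `ZMod 2`. -/
def toZ (b : Bool) : ZMod 2 := cond b 1 0

lemma toZ_eq_ite (b : Bool) : toZ b = if b = true then 1 else 0 := by
  cases b <;> rfl

lemma toZ_xor (a b : Bool) : toZ (xor a b) = toZ a + toZ b := by
  cases a <;> cases b <;> decide

lemma toZ_not (b : Bool) : toZ (!b) = toZ b + 1 := by
  cases b <;> decide

lemma toZ_bodd (t : ℕ) : toZ t.bodd = (t : ZMod 2) := by
  induction t with
  | zero => rfl
  | succ t ih => rw [Nat.bodd_succ, toZ_not, ih]; push_cast; ring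

lemma negpow_congr (a b : ℕ) (h : a % 2 = b % 2) : ((-1 : ℝ)) ^ a = (-1) ^ b := by
  conv_lhs => rw [← Nat.div_add_mod a 2]
  conv_rhs => rw [← Nat.div_add_mod b 2]
  rw [pow_add, pow_add, pow_mul, pow_mul, neg_one_sq, one_pow, one_pow, h]

lemma cast_card_filter {α : Type*} (s : Finset α) (p : α → Prop) [DecidablePred p] :
    (((s.filter p).card : ℕ) : ZMod 2) = ∑ i ∈ s, (if p i then (1 : ZMod 2) else 0) := by
  rw [Finset.card_filter, Nat.cast_sum]
  exact Finset.sum_congr rfl fun i _ => by split <;> simp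

variable {n : ℕ}

/-- number of disagreements with `xstar` up to and including `i`. -/
def rnk (xstar x : Fin n → Bool) (i : Fin n) : ℕ :=
  (univ.filter fun j : Fin n => j ≤ i ∧ ¬ x j = xstar j).card

/-- the two deterministic output strings of the box (for shared bit `r`). -/
def boxA (xstar astar x : Fin n → Bool) (r : Bool) (i : Fin n) : Bool :=
  if x i = xstar i then astar i
  else xor (xor (astar i) (xstar i)) (xor r (rnk xstar x i).bodd)

/-- the box: equal mixture of the two deterministic strategies. -/
noncomputable def boxP (xstar astar x a : Fin n → Bool) : ℝ :=
  (if a = boxA xstar astar x false then 1/2 else 0) +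
  (if a = boxA xstar astar x true then 1/2 else 0)

def preCnt (m : ℕ) (xstar x : Fin n → Bool) : ℕ :=
  (univ.filter fun j : Fin n => (j : ℕ) < m ∧ ¬ x j = xstar j).card

def midCnt (m : ℕ) (xstar x : Fin n → Bool) (i : Fin n) : ℕ :=
  (univ.filter fun j : Fin n => m ≤ (j : ℕ) ∧ j ≤ i ∧ ¬ x j = xstar j).card

lemma rnk_split (m : ℕ) (xstar x : Fin n → Bool) (i : Fin n) (him : m ≤ i.val) :
    rnk xstar x i = preCnt m xstar x + midCnt m xstar x i := by
  unfold rnk preCnt midCnt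
  rw [Finset.card_filter, Finset.card_filter, Finset.card_filter, ← Finset.sum_add_distrib]
  refine Finset.sum_congr rfl fun j _ => ?_
  by_cases h3 : x j = xstar j
  · simp [h3]
  · by_cases h1 : (j : ℕ) < m
    · have hji : j ≤ i := by rw [Fin.le_def]; omega
      simp [h1, h3, hji, show ¬ m ≤ (j : ℕ) by omega]
    · have hm : m ≤ (j : ℕ) := by omega
      by_cases h2 : j ≤ i <;> simp [h1, h2, h3, hm]

lemma mid_eq (m len : ℕ) (xstar x x' : Fin n → Bool)
    (hag : ∀ i : Fin n, m ≤ i.val → i.val < m + len → x i = x' i)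
    (i : Fin n) (hil : i.val < m + len) :
    midCnt m xstar x i = midCnt m xstar x' i := by
  unfold midCnt
  congr 1
  apply Finset.filter_congr
  intro j _
  by_cases h1 : m ≤ (j : ℕ)
  · by_cases h2 : j ≤ i
    · have hj : x j = x' j := by
        refine hag j h1 ?_
        rw [Fin.le_def] at h2; omega
      simp [h1, h2, hj]
    · simp [h2]
  · simp [h1]

lemma boxA_window (m len : ℕ) (xstar astar x x' : Fin n → Bool)
    (hag : ∀ i : Fin n, m ≤ i.val → i.val < m + len → x i = x' i)
    (r : Bool) (i : Fin n) (him : m ≤ i.val) (hil : i.val < m + len) :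
    boxA xstar astar x r i
      = boxA xstar astar x'
          (xor r (xor (preCnt m xstar x).bodd (preCnt m xstar x').bodd)) i := by
  have hxx' : x i = x' i := hag i him hil
  by_cases h : x i = xstar i
  · have h' : x' i = xstar i := by rw [← hxx']; exact h
    simp [boxA, h, h']
  · have h' : ¬ x' i = xstar i := by rw [← hxx']; exact h
    have e1 : rnk xstar x i = preCnt m xstar x + midCnt m xstar x i := rnk_split m xstar x i him
    have e2 : rnk xstar x' i = preCnt m xstar x' + midCnt m xstar x' i := rnk_split m xstar x' i him
    have e3 : midCnt m xstar x i = midCnt m xstar x' i := mid_eq m len xstar x x' hag i hil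
    simp only [boxA, if_neg h, if_neg h', e1, e2, ← e3, Nat.bodd_add]
    have tauto : ∀ u v p p' q r : Bool,
        xor (xor u v) (xor r (xor p q)) = xor (xor u v) (xor (xor r (xor p p')) (xor p' q)) := by
      decide
    exact tauto (astar i) (xstar i) (preCnt m xstar x).bodd (preCnt m xstar x').bodd
      (midCnt m xstar x i).bodd r

lemma parity_boxA (xstar astar x : Fin n → Bool) (r : Bool) (k kstar : ℕ)
    (hastar : ∑ i, toZ (astar i) = (kstar : ZMod 2))
    (hx : (univ.filter fun i => x i = true).card + 2 * k = n)
    (hxs : (univ.filter fun i => xstar i = true).card + 2 * kstar = n) :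
    (((univ.filter fun i => boxA xstar astar x r i = true).card : ℕ) : ZMod 2)
      = (k : ZMod 2) := by
  classical
  set F : Finset (Fin n) := univ.filter fun i => ¬ x i = xstar i with hF
  set g : ℕ := F.card with hg
  set G1 : ℕ := (F.filter fun i => xstar i = true).card with hG1
  set G0 : ℕ := (F.filter fun i => ¬ xstar i = true).card with hG0
  set S : ℕ := ∑ i ∈ F, rnk xstar x i with hS
  -- g = G1 + G0
  have hsplit : G1 + G0 = g := Finset.card_filter_add_card_filter_not _
  -- counting identity relating weights
  have hE : (univ.filter fun i => x i = true).card + G1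
      = (univ.filter fun i => xstar i = true).card + G0 := by
    rw [hG1, hG0, hF, Finset.filter_filter, Finset.filter_filter,
      Finset.card_filter, Finset.card_filter, Finset.card_filter, Finset.card_filter,
      ← Finset.sum_add_distrib, ← Finset.sum_add_distrib]
    refine Finset.sum_congr rfl fun i _ => ?_
    cases hxi : x i <;> cases hxsi : xstar i <;> simp [hxi, hxsi]
  -- double counting: 2S = g^2 + g
  have hrnk : ∀ i : Fin n, rnk xstar x i = ∑ j ∈ F, (if j ≤ i then (1 : ℕ) else 0) := by
    intro i
    rw [← Finset.card_filter, hF, Finset.filter_filter]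
    unfold rnk
    congr 1
    exact Finset.filter_congr fun j _ => by tauto
  have h1 : S = ∑ i ∈ F, ∑ j ∈ F, (if j ≤ i then (1 : ℕ) else 0) :=
    Finset.sum_congr rfl fun i _ => hrnk i
  have h2 : S = ∑ i ∈ F, ∑ j ∈ F, (if i ≤ j then (1 : ℕ) else 0) := by
    rw [h1, Finset.sum_comm]
  have hSS : 2 * S = g * g + g := by
    have hpt : ∀ i j : Fin n,
        ((if j ≤ i then (1 : ℕ) else 0) + (if i ≤ j then 1 else 0))
          = 1 + (if i = j then 1 else 0) := by
      intro i j
      by_cases he : i = j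
      · subst he; simp
      · rcases le_total i j with h | h
        · have hji : ¬ j ≤ i := fun hji => he (le_antisymm h hji)
          simp [h, hji, he]
        · have hij : ¬ i ≤ j := fun hij => he (le_antisymm hij h)
          simp [h, hij, he]
    have hsum : ∑ i ∈ F, ∑ j ∈ F,
        ((if j ≤ i then (1 : ℕ) else 0) + (if i ≤ j then 1 else 0))
        = ∑ i ∈ F, ∑ j ∈ F, (1 + if i = j then (1 : ℕ) else 0) :=
      Finset.sum_congr rfl fun i _ => Finset.sum_congr rfl fun j _ => hpt i j
    have lhs_eq : ∑ i ∈ F, ∑ j ∈ F,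
        ((if j ≤ i then (1 : ℕ) else 0) + (if i ≤ j then 1 else 0)) = S + S := by
      simp only [Finset.sum_add_distrib]
      rw [← h1, ← h2]
    have rhs_eq : ∑ i ∈ F, ∑ j ∈ F, (1 + if i = j then (1 : ℕ) else 0) = g * g + g := by
      simp only [Finset.sum_add_distrib, Finset.sum_const, smul_eq_mul, mul_one]
      have : ∀ i ∈ F, (∑ j ∈ F, if i = j then (1 : ℕ) else 0) = 1 := by
        intro i hi
        rw [Finset.sum_ite_eq F i (fun _ => (1 : ℕ)), if_pos hi]
      rw [Finset.sum_congr rfl this]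
      simp [mul_comm, hg]
    omega
  -- parity of g
  have hEnat : 2 * k + G0 = 2 * kstar + G1 := by omega
  obtain ⟨mg, hmg⟩ : ∃ m, g = 2 * m := ⟨g / 2, by omega⟩
  -- pointwise value of toZ (boxA ...)
  have hpt : ∀ i : Fin n, toZ (boxA xstar astar x r i)
      = toZ (astar i) + (if ¬ x i = xstar i
          then toZ (xstar i) + toZ r + ((rnk xstar x i : ℕ) : ZMod 2) else 0) := by
    intro i
    by_cases h : x i = xstar i
    · simp [boxA, h]
    · rw [if_pos h]
      simp only [boxA, if_neg h, toZ_xor, toZ_bodd]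
      ring
  have main : (((univ.filter fun i => boxA xstar astar x r i = true).card : ℕ) : ZMod 2)
      = (kstar : ZMod 2) + ((G1 : ZMod 2) + F.card • toZ r + (S : ZMod 2)) := by
    rw [cast_card_filter]
    calc ∑ i, (if boxA xstar astar x r i = true then (1 : ZMod 2) else 0)
        = ∑ i, toZ (boxA xstar astar x r i) :=
          Finset.sum_congr rfl fun i _ => (toZ_eq_ite _).symm
      _ = ∑ i, (toZ (astar i) + (if ¬ x i = xstar i
            then toZ (xstar i) + toZ r + ((rnk xstar x i : ℕ) : ZMod 2) else 0)) :=
          Finset.sum_congr rfl fun i _ => hpt i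
      _ = (∑ i, toZ (astar i)) + ∑ i, (if ¬ x i = xstar i
            then toZ (xstar i) + toZ r + ((rnk xstar x i : ℕ) : ZMod 2) else 0) :=
          Finset.sum_add_distrib
      _ = (kstar : ZMod 2) + ∑ i ∈ F, (toZ (xstar i) + toZ r + ((rnk xstar x i : ℕ) : ZMod 2)) := by
          rw [hastar, hF, Finset.sum_filter]
      _ = (kstar : ZMod 2) + ((G1 : ZMod 2) + F.card • toZ r + (S : ZMod 2)) := by
          congr 1
          rw [Finset.sum_add_distrib, Finset.sum_add_distrib]
          congr 2
          · rw [hG1, cast_card_filter]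
            exact Finset.sum_congr rfl fun i _ => toZ_eq_ite _
          · exact Finset.sum_const _
          · rw [hS, Nat.cast_sum]
  have hr : F.card • toZ r = 0 := by
    cases r
    · rw [show toZ false = 0 from rfl, smul_zero]
    · have hg0 : ((g : ℕ) : ZMod 2) = 0 := by
        rw [hmg]
        push_cast
        rw [show (2 : ZMod 2) = 0 from by decide]
        ring
      rw [show toZ true = 1 from rfl, nsmul_eq_mul, mul_one]
      exact hg0
  have hmod : (kstar + G1 + S) % 2 = k % 2 := by
    obtain ⟨u, hu⟩ : ∃ u, 2 * S = 2 * (2 * u) + g := ⟨mg * mg, by rw [hSS, hmg]; ring⟩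
    omega
  have hcast : (kstar : ZMod 2) + ((G1 : ZMod 2) + 0 + (S : ZMod 2))
      = ((kstar + G1 + S : ℕ) : ZMod 2) := by push_cast; ring
  rw [main, hr, hcast]
  exact (ZMod.natCast_eq_natCast_iff _ _ _).mpr hmod

end MerminAttackAux

open MerminAttackAux

/-- **Attack on Mermin-based randomness amplification.** For any odd `n ≥ 3` and any
input string `x*` appearing in the `n`-party Mermin inequality (i.e. `Σᵢ x*ᵢ = n − 2k*`),
there is an `n`-party box `P` (with binary inputs and outputs) satisfying the
contiguous-subset relativistic causality constraints, maximally violating the Mermin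
inequality, and nevertheless deterministic on the input `x*`. -/
theorem exists_causal_box_mermin_deterministic
    (n : ℕ) (hn3 : 3 ≤ n) (hodd : Odd n)
    (xstar : Fin n → Bool)
    (hxstar : ∃ kstar : ℕ,
      (Finset.univ.filter (fun i => xstar i = true)).card + 2 * kstar = n) :
    ∃ (P : (Fin n → Bool) → (Fin n → Bool) → ℝ) (astar : Fin n → Bool),
      -- n-party box: P x a is the probability of outputs a given inputs x
      (∀ x a, 0 ≤ P x a) ∧
      (∀ x, ∑ a, P x a = 1) ∧
      -- (i) contiguous-subset relativistic causality constraints: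
      -- for every contiguous set S = {m, …, m+len−1} with 1 ≤ len ≤ n−1,
      -- the marginal of the outputs in S is independent of the inputs outside S
      (∀ (m len : ℕ), 1 ≤ len → len ≤ n - 1 → m + len ≤ n →
        ∀ (x x' : Fin n → Bool),
          (∀ i : Fin n, m ≤ i.val → i.val < m + len → x i = x' i) →
          ∀ aS : Fin n → Bool,
            ∑ a ∈ Finset.univ.filter
                (fun a : Fin n → Bool =>
                  ∀ i : Fin n, m ≤ i.val → i.val < m + len → a i = aS i),
              P x a
            = ∑ a ∈ Finset.univ.filter
                (fun a : Fin n → Bool =>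
                  ∀ i : Fin n, m ≤ i.val → i.val < m + len → a i = aS i),
              P x' a) ∧
      -- (ii) maximal Mermin violation: ⟨x⟩ = (−1)^k whenever Σᵢ xᵢ = n − 2k
      (∀ (x : Fin n → Bool) (k : ℕ),
        (Finset.univ.filter (fun i => x i = true)).card + 2 * k = n →
        ∑ a, ((-1 : ℝ) ^ (Finset.univ.filter (fun i => a i = true)).card) * P x a
          = (-1 : ℝ) ^ k) ∧
      -- (iii) deterministic output on input x*
      P xstar astar = 1 := by
  classical
  obtain ⟨kstar, hkstar⟩ := hxstar
  have h0n : 0 < n := by omega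
  set astar : Fin n → Bool := fun i => decide ((i : ℕ) = 0) && kstar.bodd with ha_def
  have hastar : ∑ i, toZ (astar i) = (kstar : ZMod 2) := by
    rw [Fintype.sum_eq_single (⟨0, h0n⟩ : Fin n)]
    · have : astar (⟨0, h0n⟩ : Fin n) = kstar.bodd := by simp [ha_def]
      rw [this, toZ_bodd]
    · intro i hi
      have hne : (i : ℕ) ≠ 0 := fun h => hi (Fin.ext h)
      have : astar i = false := by simp [ha_def, hne]
      rw [this]
      rfl
  refine ⟨boxP xstar astar, astar, ?_, ?_, ?_, ?_, ?_⟩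
  · intro x a
    have h : ∀ c : Fin n → Bool, (0:ℝ) ≤ if a = c then 1/2 else 0 := fun c => by
      split <;> norm_num
    exact add_nonneg (h _) (h _)
  · intro x
    unfold boxP
    rw [Finset.sum_add_distrib, Finset.sum_ite_eq' _ _ _, Finset.sum_ite_eq' _ _ _]
    simp
    norm_num
  · intro m len hlen1 hlen2 hmlen x x' hag aS
    have key : ∀ r : Bool,
        ((∀ i : Fin n, m ≤ i.val → i.val < m + len → boxA xstar astar x r i = aS i)
        ↔ (∀ i : Fin n, m ≤ i.val → i.val < m + len →
            boxA xstar astar x'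
              (xor r (xor (preCnt m xstar x).bodd (preCnt m xstar x').bodd)) i = aS i)) := by
      intro r
      constructor <;> intro h i h1 h2
      · rw [← boxA_window m len xstar astar x x' hag r i h1 h2]; exact h i h1 h2
      · rw [boxA_window m len xstar astar x x' hag r i h1 h2]; exact h i h1 h2
    have expand : ∀ y : Fin n → Bool,
        (∑ a ∈ Finset.univ.filter
            (fun a : Fin n → Bool =>
              ∀ i : Fin n, m ≤ i.val → i.val < m + len → a i = aS i),
          boxP xstar astar y a)
        = (if (∀ i : Fin n, m ≤ i.val → i.val < m + len → boxA xstar astar y false i = aS i)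
            then (1:ℝ)/2 else 0)
        + (if (∀ i : Fin n, m ≤ i.val → i.val < m + len → boxA xstar astar y true i = aS i)
            then (1:ℝ)/2 else 0) := by
      intro y
      unfold boxP
      rw [Finset.sum_add_distrib, Finset.sum_ite_eq' _ _ _, Finset.sum_ite_eq' _ _ _]
      simp [Finset.mem_filter]
    rw [expand x, expand x', if_congr (key false) rfl rfl, if_congr (key true) rfl rfl]
    cases hcc : xor (preCnt m xstar x).bodd (preCnt m xstar x').bodd
    · rw [show xor false false = false from rfl, show xor true false = true from rfl]
    · rw [show xor false true = true from rfl, show xor true true = false from rfl, add_comm]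
  · intro x k hk
    have hcardeq : ∀ r : Bool,
        ((Finset.univ.filter fun i => boxA xstar astar x r i = true)).card % 2 = k % 2 := by
      intro r
      have h := parity_boxA xstar astar x r k kstar hastar hk hkstar
      exact (ZMod.natCast_eq_natCast_iff _ _ _).mp h
    have hone : ∀ c : Fin n → Bool,
        ∑ a : Fin n → Bool,
          ((-1:ℝ) ^ (Finset.univ.filter (fun i => a i = true)).card)
            * (if a = c then (1:ℝ)/2 else 0)
        = ((-1:ℝ) ^ (Finset.univ.filter (fun i => c i = true)).card) * (1/2) := by
      intro c
      rw [Finset.sum_congr rfl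
        (g := fun a => if a = c
          then ((-1:ℝ) ^ (Finset.univ.filter (fun i => a i = true)).card) * (1/2) else 0)
        (fun a _ => by by_cases h : a = c <;> simp [h])]
      rw [Finset.sum_ite_eq' _ _ _]
      simp
    calc ∑ a, ((-1 : ℝ) ^ (Finset.univ.filter (fun i => a i = true)).card) * boxP xstar astar x a
        = (∑ a : Fin n → Bool, ((-1:ℝ) ^ (Finset.univ.filter (fun i => a i = true)).card)
              * (if a = boxA xstar astar x false then (1:ℝ)/2 else 0))
          + ∑ a : Fin n → Bool, ((-1:ℝ) ^ (Finset.univ.filter (fun i => a i = true)).card)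
              * (if a = boxA xstar astar x true then (1:ℝ)/2 else 0) := by
          rw [← Finset.sum_add_distrib]
          exact Finset.sum_congr rfl fun a _ => by simp only [boxP, mul_add]
      _ = ((-1:ℝ) ^ (Finset.univ.filter
              (fun i => boxA xstar astar x false i = true)).card) * (1/2)
          + ((-1:ℝ) ^ (Finset.univ.filter
              (fun i => boxA xstar astar x true i = true)).card) * (1/2) := by
          rw [hone, hone]
      _ = (-1:ℝ)^k * (1/2) + (-1:ℝ)^k * (1/2) := by
          rw [negpow_congr _ k (hcardeq false), negpow_congr _ k (hcardeq true)]
      _ = (-1:ℝ)^k := by ring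
  · have hA : ∀ r : Bool, boxA xstar astar xstar r = astar := by
      intro r; funext i; simp [boxA]
    simp [boxP, hA]
    norm_num
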